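/- Let I be an informativeness predicate on subsets of ℤ^d satisfying the SIN assumption, let 0 ≤ r_a and r_a + 1 ≤ r_b, and let A_{r_a} = {v ∈ ℤ^d : I(S_{r_a}(v))} and A_{r_b} = {v ∈ ℤ^d : I(S_{r_b}(v))}. If A_{r_a} is nonempty and A_{r_a} ≠ ℤ^d, then A_{r_a} is a strict subset of A_{r_b}: there exists a voxel v with I(S_{r_b}(v)) but not I(S_{r_a}(v)). In particular the number of informative searchlights strictly increases from radius r_a to radius r_b. (Paper's Theorem 4.) -/

import Mathlib

/-- Euclidean distance between voxels in the integer lattice `ℤ^d`. -/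
noncomputable def vdist {d : ℕ} (v w : Fin d → ℤ) : ℝ :=
  Real.sqrt (∑ i, ((v i : ℝ) - (w i : ℝ)) ^ 2)

/-- The searchlight of radius `r` centered at voxel `v`. -/
def searchlight {d : ℕ} (r : ℝ) (v : Fin d → ℤ) : Set (Fin d → ℤ) :=
  {w | vdist w v ≤ r}

/-- The superset-informativeness (SIN) assumption. -/
def SIN {d : ℕ} (I : Set (Fin d → ℤ) → Prop) : Prop :=
  ∀ G H : Set (Fin d → ℤ), G.Nonempty → I G → G ⊆ H → I H

/-- Embedding of a voxel into Euclidean space. -/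
noncomputable def vemb {d : ℕ} (v : Fin d → ℤ) : EuclideanSpace ℝ (Fin d) :=
  WithLp.toLp 2 (fun i => (v i : ℝ))

lemma vdist_eq_dist {d : ℕ} (v w : Fin d → ℤ) : vdist v w = dist (vemb v) (vemb w) := by
  rw [EuclideanSpace.dist_eq, vdist]
  congr 1
  refine Finset.sum_congr rfl fun i _ => ?_
  rw [Real.dist_eq, sq_abs]
  rfl

lemma vdist_self {d : ℕ} (v : Fin d → ℤ) : vdist v v = 0 := by
  rw [vdist_eq_dist, dist_self]

lemma vdist_triangle {d : ℕ} (u v w : Fin d → ℤ) :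
    vdist u w ≤ vdist u v + vdist v w := by
  rw [vdist_eq_dist, vdist_eq_dist, vdist_eq_dist]; exact dist_triangle _ _ _

lemma vdist_update {d : ℕ} (v : Fin d → ℤ) (i : Fin d) (s : ℤ) :
    vdist (Function.update v i (v i + s)) v = |(s : ℝ)| := by
  rw [vdist]
  have : ∀ j, (((Function.update v i (v i + s)) j : ℝ) - (v j : ℝ)) ^ 2
      = if j = i then (s : ℝ) ^ 2 else 0 := by
    intro j
    by_cases h : j = i
    · subst h; simp only [Function.update_self, if_true]; push_cast; ring
    · simp only [Function.update_of_ne h, h, if_false]; ring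
  rw [Finset.sum_congr rfl fun j _ => this j, Finset.sum_ite_eq' _ i]
  simp [Real.sqrt_sq_eq_abs]

/-- Boundary lemma: if `u ∈ A` and `w ∉ A`, there is an adjacent pair
crossing the boundary. -/
lemma exists_boundary {d : ℕ} (A : Set (Fin d → ℤ)) :
    ∀ n (u w : Fin d → ℤ), (∑ i, (u i - w i).natAbs) = n → u ∈ A → w ∉ A →
      ∃ p q : Fin d → ℤ, p ∈ A ∧ q ∉ A ∧ vdist p q ≤ 1 := by
  intro n
  induction n with
  | zero =>
    intro u w h hu hw
    exfalso
    have : u = w := by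
      funext i
      have := Finset.sum_eq_zero_iff.mp h i (Finset.mem_univ i)
      omega
    exact hw (this ▸ hu)
  | succ n ih =>
    intro u w h hu hw
    have hne : u ≠ w := by
      rintro rfl
      simp at h
    obtain ⟨i, hi⟩ : ∃ i, u i ≠ w i := by
      by_contra hc
      push_neg at hc
      exact hne (funext hc)
    set s : ℤ := if u i < w i then 1 else -1 with hs
    set u' : Fin d → ℤ := Function.update u i (u i + s) with hu'
    have hdist : vdist u' u = 1 := by
      rw [hu', vdist_update]
      rcases lt_or_ge (u i) (w i) with hlt | hge
      · simp [hs, hlt]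
      · have : ¬ u i < w i := not_lt.mpr hge
        simp [hs, this]
    by_cases hmem : u' ∈ A
    · -- recurse: sum decreased by 1
      apply ih u' w _ hmem hw
      have hterm : (u' i - w i).natAbs + 1 = (u i - w i).natAbs := by
        simp only [hu', Function.update_self, hs]
        rcases lt_or_ge (u i) (w i) with hlt | hge
        · simp only [if_pos hlt]; omega
        · simp only [if_neg (not_lt.mpr hge)]; omega
      have hother : ∀ j, j ≠ i → (u' j - w j).natAbs = (u j - w j).natAbs := by
        intro j hj
        simp [hu', Function.update_of_ne hj]
      have hsum : (∑ j, (u j - w j).natAbs)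
          = (∑ j, (u' j - w j).natAbs) + 1 := by
        rw [← Finset.sum_erase_add _ _ (Finset.mem_univ i),
            ← Finset.sum_erase_add _ (fun j => (u' j - w j).natAbs) (Finset.mem_univ i),
            Finset.sum_congr rfl fun j hj => (hother j (Finset.ne_of_mem_erase hj)).symm]
        omega
      omega
    · exact ⟨u, u', hu, hmem, by rw [show vdist u u' = vdist u' u by
        rw [vdist_eq_dist, vdist_eq_dist, dist_comm], hdist]⟩

/-- Theorem 4: if the set of informative centers at radius `r_a` is nonempty
and not all of `ℤ^d`, then it is a strict subset of the set of informative
centers at radius `r_b`. -/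
theorem informative_centers_strict_growth (d : ℕ) (hd : 1 ≤ d)
    (I : Set (Fin d → ℤ) → Prop) (hI : SIN I)
    (ra rb : ℝ) (hra : 0 ≤ ra) (hrb : ra + 1 ≤ rb)
    (hne : {v : Fin d → ℤ | I (searchlight ra v)}.Nonempty)
    (hproper : {v : Fin d → ℤ | I (searchlight ra v)} ≠ Set.univ) :
    {v : Fin d → ℤ | I (searchlight ra v)} ⊂
      {v : Fin d → ℤ | I (searchlight rb v)} := by
  set A := {v : Fin d → ℤ | I (searchlight ra v)} with hA
  have hsl_ne : ∀ (r : ℝ), 0 ≤ r → ∀ v : Fin d → ℤ, (searchlight r v).Nonempty := by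
    intro r hr v
    exact ⟨v, by simpa [searchlight, vdist_self] using hr⟩
  constructor
  · -- A ⊆ B
    intro v hv
    refine hI (searchlight ra v) (searchlight rb v) (hsl_ne ra hra v) hv ?_
    intro w hw
    calc vdist w v ≤ ra := hw
      _ ≤ rb := by linarith
  · -- strictness
    intro hsub
    obtain ⟨u, hu⟩ := hne
    obtain ⟨w, hw⟩ : ∃ w, w ∉ A := by
      by_contra hc
      push_neg at hc
      exact hproper (Set.eq_univ_of_forall hc)
    obtain ⟨p, q, hp, hq, hpq⟩ := exists_boundary A _ u w rfl hu hw
    apply hq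
    -- q ∉ A but searchlight ra p ⊆ searchlight rb q so I (searchlight rb q), and hsub gives A back
    have hIq : I (searchlight rb q) := by
      refine hI (searchlight ra p) (searchlight rb q) (hsl_ne ra hra p) hp ?_
      intro x hx
      calc vdist x q ≤ vdist x p + vdist p q := vdist_triangle _ _ _
        _ ≤ ra + 1 := add_le_add hx hpq
        _ ≤ rb := hrb
    exact hsub hIq
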